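/- Let C be a rotationally asymmetric configuration of finitely many distinct points on a circle with true leader L. Any other expected leader r of C (i.e., any point r ≠ L that is a cognizant or undecided leader) satisfies α(L, r) ≥ π, where α(L,r) is the clockwise angular distance from L to r. -/

import Mathlib

open Real
open scoped Classical

noncomputable section

/-- Clockwise angular distance from `p` to `q`, a real number in `[0, 2π)`. -/
def cw (p q : Real.Angle) : ℝ :=
  if 0 ≤ (q - p).toReal then (q - p).toReal else (q - p).toReal + 2 * π

/-- The sorted list of clockwise distances from `p` to the points of `S`. -/
def dists (S : Finset Real.Angle) (p : Real.Angle) : List ℝ :=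
  (S.image (cw p)).sort (· ≤ ·)

/-- The clockwise angular-gap sequence of `p` with respect to the configuration `S`:
the sequence of clockwise gaps between consecutive points, starting from `p`. -/
def gapSeq (S : Finset Real.Angle) (p : Real.Angle) : List ℝ :=
  List.zipWith (fun a b => a - b) ((dists S p).tail ++ [2 * π]) (dists S p)

/-- Lexicographic strict order on lists of reals. -/
def lexLt (a b : List ℝ) : Prop := List.Lex (· < ·) a b

/-- `L` is the true leader of `S`: its angular-gap sequence is lexicographically
strictly smallest. -/
def TrueLeader (S : Finset Real.Angle) (L : Real.Angle) : Prop :=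
  L ∈ S ∧ ∀ r ∈ S, r ≠ L → lexLt (gapSeq S L) (gapSeq S r)

/-- `S` is rotationally asymmetric: no nontrivial rotation about the center fixes `S`. -/
def RotAsym (S : Finset Real.Angle) : Prop :=
  ∀ θ : Real.Angle, θ ≠ 0 → S.image (· + θ) ≠ S

/-- The antipodal position of a point on the circle. -/
def antipode (p : Real.Angle) : Real.Angle := p + (π : Real.Angle)

/-- The hypothetical configuration in which the antipode of `r` is unoccupied. -/
def C0 (S : Finset Real.Angle) (r : Real.Angle) : Finset Real.Angle := S.erase (antipode r)

/-- The hypothetical configuration in which the antipode of `r` is occupied. -/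
def C1 (S : Finset Real.Angle) (r : Real.Angle) : Finset Real.Angle := insert (antipode r) S

/-- `r` is an undecided leader: both hypothetical configurations are rotationally
asymmetric and `r` is the true leader of exactly one of them. -/
def Undecided (S : Finset Real.Angle) (r : Real.Angle) : Prop :=
  r ∈ S ∧ RotAsym (C0 S r) ∧ RotAsym (C1 S r) ∧
    Xor' (TrueLeader (C0 S r) r) (TrueLeader (C1 S r) r)

/-- `r` is a cognizant leader: `r` is the true leader in every consistent
(hypothetical) configuration. -/
def Cognizant (S : Finset Real.Angle) (r : Real.Angle) : Prop :=
  r ∈ S ∧ (RotAsym (C0 S r) → TrueLeader (C0 S r) r) ∧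
    (RotAsym (C1 S r) → TrueLeader (C1 S r) r)

/-- An expected leader is a cognizant leader or an undecided leader. -/
def ExpectedLeader (S : Finset Real.Angle) (r : Real.Angle) : Prop :=
  Cognizant S r ∨ Undecided S r


namespace Stmt9Aux


lemma cw_nonneg (p q : Real.Angle) : 0 ≤ cw p q := by
  unfold cw
  split_ifs with h
  · exact h
  · push_neg at h
    have h2 := Real.Angle.neg_pi_lt_toReal (q - p)
    nlinarith [Real.pi_pos]

lemma cw_lt (p q : Real.Angle) : cw p q < 2 * π := by
  unfold cw
  split_ifs with h
  · have h2 := Real.Angle.toReal_le_pi (q - p)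
    nlinarith [Real.pi_pos]
  · push_neg at h
    nlinarith

lemma cw_coe (p q : Real.Angle) : ((cw p q : ℝ) : Real.Angle) = q - p := by
  unfold cw
  split_ifs with h
  · exact Real.Angle.coe_toReal _
  · rw [Real.Angle.coe_add, Real.Angle.coe_two_pi, add_zero, Real.Angle.coe_toReal]

lemma cw_unique {p q : Real.Angle} {t : ℝ} (h0 : 0 ≤ t) (h2 : t < 2 * π)
    (h : ((t : ℝ) : Real.Angle) = q - p) : cw p q = t := by
  have hc := cw_coe p q
  rw [← h] at hc
  rw [Real.Angle.angle_eq_iff_two_pi_dvd_sub] at hc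
  obtain ⟨k, hk⟩ := hc
  have hπ := Real.pi_pos
  have hcw0 := cw_nonneg p q
  have hcw2 := cw_lt p q
  have hk1 : (k : ℝ) < 1 := by nlinarith
  have hk2 : (-1 : ℝ) < k := by nlinarith
  have hk0 : k = 0 := by
    have a1 : k < 1 := by exact_mod_cast hk1
    have a2 : (-1 : ℤ) < k := by exact_mod_cast hk2
    omega
  rw [hk0] at hk
  push_cast at hk
  linarith

lemma cw_self (p : Real.Angle) : cw p p = 0 := by
  apply cw_unique le_rfl (by positivity)
  simp

lemma eq_add_cw (p q : Real.Angle) : q = p + ((cw p q : ℝ) : Real.Angle) := by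
  rw [cw_coe]; abel

lemma cw_inj {x y z : Real.Angle} (h : cw x y = cw x z) : y = z := by
  have h1 := cw_coe x y
  have h2 := cw_coe x z
  rw [h] at h1
  rw [h1] at h2
  exact sub_left_inj.mp h2

lemma cw_eq_zero {p q : Real.Angle} (h : cw p q = 0) : p = q := by
  have := cw_inj (x := p) (y := p) (z := q) ?_
  · exact this
  · rw [cw_self, h]

lemma cw_sum {p q : Real.Angle} (h : p ≠ q) : cw p q + cw q p = 2 * π := by
  have h1 := cw_coe p q
  have h2 := cw_coe q p
  have hsum : (((cw p q + cw q p : ℝ)) : Real.Angle) = 0 := by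
    rw [Real.Angle.coe_add, h1, h2]; abel
  have hsum' : ((cw p q + cw q p : ℝ) : Real.Angle) = ((0 : ℝ) : Real.Angle) := by
    rw [hsum]; norm_num
  rw [Real.Angle.angle_eq_iff_two_pi_dvd_sub] at hsum'
  obtain ⟨k, hk⟩ := hsum'
  simp only [sub_zero] at hk
  have hπ := Real.pi_pos
  have b1 := cw_nonneg p q; have b2 := cw_lt p q
  have b3 := cw_nonneg q p; have b4 := cw_lt q p
  have hk2 : (k : ℝ) < 2 := by nlinarith
  have hk0 : (0 : ℝ) ≤ k := by nlinarith
  have hknot0 : k ≠ 0 := by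
    intro h0
    rw [h0] at hk
    push_cast at hk
    have e1 : cw p q = 0 := by linarith
    exact h (cw_eq_zero e1)
  have hk1 : k = 1 := by
    have a1 : (k:ℤ) < 2 := by exact_mod_cast hk2
    have a2 : (0:ℤ) ≤ k := by exact_mod_cast hk0
    omega
  rw [hk1] at hk
  push_cast at hk
  linarith

lemma cw_antipode (r : Real.Angle) : cw r (antipode r) = π := by
  apply cw_unique Real.pi_pos.le (by nlinarith [Real.pi_pos])
  unfold antipode; abel

lemma antipode_antipode (r : Real.Angle) : antipode (antipode r) = r := by
  unfold antipode
  rw [add_assoc, ← Real.Angle.coe_add]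
  rw [show ((π + π : ℝ) : Real.Angle) = ((2*π : ℝ) : Real.Angle) by norm_num [two_mul]]
  rw [Real.Angle.coe_two_pi, add_zero]

lemma antipode_ne (r : Real.Angle) : antipode r ≠ r := by
  intro h
  have := cw_antipode r
  rw [h, cw_self] at this
  exact Real.pi_ne_zero this.symm


def cnt (U : Finset Real.Angle) (x : Real.Angle) (w : ℝ) : ℕ :=
  (U.filter (fun y => cw x y ≤ w)).card

lemma cnt_insert (T : Finset Real.Angle) (p x : Real.Angle) (w : ℝ) (hp : p ∉ T) :
    cnt (insert p T) x w = cnt T x w + if cw x p ≤ w then 1 else 0 := by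
  unfold cnt
  rw [Finset.filter_insert]
  split_ifs with h
  · rw [Finset.card_insert_of_notMem (fun hc => hp (Finset.mem_of_mem_filter _ hc))]
  · rw [add_zero]

lemma cnt_top (U : Finset Real.Angle) (x : Real.Angle) {w : ℝ} (h : 2 * π ≤ w) :
    cnt U x w = U.card := by
  unfold cnt
  congr 1
  apply Finset.filter_true_of_mem
  intro y _
  exact le_trans (cw_lt x y).le h

lemma cw_sub_of_le {x r y : Real.Angle} (h : cw x r ≤ cw x y) : cw r y = cw x y - cw x r := by
  apply cw_unique (by linarith) (by linarith [cw_lt x y, cw_nonneg x r])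
  rw [Real.Angle.coe_sub, cw_coe, cw_coe]
  abel

lemma cw_add_of_lt {x r y : Real.Angle} (h : cw x r + cw r y < 2 * π) :
    cw x y = cw x r + cw r y := by
  apply cw_unique (by linarith [cw_nonneg x r, cw_nonneg r y]) h
  rw [Real.Angle.coe_add, cw_coe, cw_coe]
  abel

lemma cnt_shift (U : Finset Real.Angle) (x r : Real.Angle) (hr : r ∈ U) (w : ℝ) (hw : 0 ≤ w)
    (h2 : cw x r + w < 2 * π) :
    cnt U x (cw x r + w) + 1 = cnt U x (cw x r) + cnt U r w := by
  classical
  set σ := cw x r with hσdef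
  have hσ0 : 0 ≤ σ := cw_nonneg x r
  -- B1 : strictly before r ; B2 : within w after r
  set B1 := U.filter (fun y => cw x y < σ) with hB1
  set B2 := U.filter (fun y => cw r y ≤ w) with hB2
  have hmemB2 : ∀ y, cw r y ≤ w → cw x y = σ + cw r y := by
    intro y hy
    exact cw_add_of_lt (by linarith)
  have hA : U.filter (fun y => cw x y ≤ σ + w) = B1 ∪ B2 := by
    ext y
    simp only [hB1, hB2, Finset.mem_union, Finset.mem_filter]
    constructor
    · rintro ⟨hyU, hyle⟩
      by_cases hc : cw x y < σ
      · exact Or.inl ⟨hyU, hc⟩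
      · push_neg at hc
        refine Or.inr ⟨hyU, ?_⟩
        have := cw_sub_of_le (x := x) (r := r) (y := y) hc
        linarith
    · rintro (⟨hyU, hlt⟩ | ⟨hyU, hle⟩)
      · exact ⟨hyU, by linarith⟩
      · exact ⟨hyU, by rw [hmemB2 y hle]; linarith⟩
  have hdisj : Disjoint B1 B2 := by
    rw [Finset.disjoint_left]
    intro y hy1 hy2
    simp only [hB1, Finset.mem_filter] at hy1
    simp only [hB2, Finset.mem_filter] at hy2
    have := hmemB2 y hy2.2
    have := cw_nonneg r y
    linarith [hy1.2]
  have hσfilter : U.filter (fun y => cw x y ≤ σ) = insert r B1 := by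
    ext y
    simp only [hB1, Finset.mem_insert, Finset.mem_filter]
    constructor
    · rintro ⟨hyU, hyle⟩
      rcases lt_or_eq_of_le hyle with hlt | heq
      · exact Or.inr ⟨hyU, hlt⟩
      · exact Or.inl (cw_inj (x := x) (heq.trans hσdef.symm.symm))
    · rintro (rfl | ⟨hyU, hlt⟩)
      · exact ⟨hr, le_rfl⟩
      · exact ⟨hyU, hlt.le⟩
  have hrnot : r ∉ B1 := by
    simp only [hB1, Finset.mem_filter]
    rintro ⟨-, hlt⟩
    exact absurd rfl (ne_of_lt hlt)
  have e1 : cnt U x (σ + w) = B1.card + B2.card := by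
    unfold cnt
    rw [hA, Finset.card_union_of_disjoint hdisj]
  have e2 : cnt U x σ = B1.card + 1 := by
    unfold cnt
    rw [hσfilter, Finset.card_insert_of_notMem hrnot, add_comm]
  have e3 : cnt U r w = B2.card := rfl
  rw [e1, e2, e3]
  ring

lemma realize_transfer (U : Finset Real.Angle) (x x' : Real.Angle) (σ : ℝ)
    (heq : ∀ v, v < σ → cnt U x v = cnt U x' v) (hσ : cnt U x σ = cnt U x' σ)
    (hy : ∃ y ∈ U, cw x' y = σ) : ∃ y ∈ U, cw x y = σ := by
  classical
  set B := U.filter (fun y => cw x y < σ) with hB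
  set B' := U.filter (fun y => cw x' y < σ) with hB'
  have hcards : B.card = B'.card := by
    set D := ((U.image (cw x)) ∪ (U.image (cw x'))).filter (fun v => v < σ) with hD
    by_cases hDe : D.Nonempty
    · set v' := D.max' hDe with hv'
      have hv'mem := D.max'_mem hDe
      have hv'lt : v' < σ := by
        have := Finset.mem_filter.mp hv'mem
        exact this.2
      have hBv : B = U.filter (fun y => cw x y ≤ v') := by
        ext y
        simp only [hB, Finset.mem_filter]
        constructor
        · rintro ⟨hyU, hylt⟩
          refine ⟨hyU, D.le_max' _ ?_⟩
          exact Finset.mem_filter.mpr ⟨Finset.mem_union_left _ (Finset.mem_image_of_mem _ hyU), hylt⟩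
        · rintro ⟨hyU, hyle⟩
          exact ⟨hyU, lt_of_le_of_lt hyle hv'lt⟩
      have hBv' : B' = U.filter (fun y => cw x' y ≤ v') := by
        ext y
        simp only [hB', Finset.mem_filter]
        constructor
        · rintro ⟨hyU, hylt⟩
          refine ⟨hyU, D.le_max' _ ?_⟩
          exact Finset.mem_filter.mpr ⟨Finset.mem_union_right _ (Finset.mem_image_of_mem _ hyU), hylt⟩
        · rintro ⟨hyU, hyle⟩
          exact ⟨hyU, lt_of_le_of_lt hyle hv'lt⟩
      have := heq v' hv'lt
      unfold cnt at this
      rw [hBv, hBv']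
      exact this
    · have hBe : B = ∅ := by
        rw [Finset.eq_empty_iff_forall_notMem]
        intro y hy
        simp only [hB, Finset.mem_filter] at hy
        exact (Finset.not_nonempty_iff_eq_empty.mpr (Finset.not_nonempty_iff_eq_empty.mp hDe ▸ rfl) : ¬ D.Nonempty) ⟨_, Finset.mem_filter.mpr ⟨Finset.mem_union_left _ (Finset.mem_image_of_mem _ hy.1), hy.2⟩⟩
      have hBe' : B' = ∅ := by
        rw [Finset.eq_empty_iff_forall_notMem]
        intro y hy
        simp only [hB', Finset.mem_filter] at hy
        exact (Finset.not_nonempty_iff_eq_empty.mpr (Finset.not_nonempty_iff_eq_empty.mp hDe ▸ rfl) : ¬ D.Nonempty) ⟨_, Finset.mem_filter.mpr ⟨Finset.mem_union_right _ (Finset.mem_image_of_mem _ hy.1), hy.2⟩⟩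
      rw [hBe, hBe']
  -- split cnt at σ into (< σ) and (= σ)
  have hsplit : ∀ (z : Real.Angle), cnt U z σ = (U.filter (fun y => cw z y < σ)).card
      + (U.filter (fun y => cw z y = σ)).card := by
    intro z
    unfold cnt
    rw [← Finset.card_union_of_disjoint]
    · congr 1
      ext y
      simp only [Finset.mem_union, Finset.mem_filter]
      constructor
      · rintro ⟨hyU, hyle⟩
        rcases lt_or_eq_of_le hyle with hlt | heq2
        · exact Or.inl ⟨hyU, hlt⟩
        · exact Or.inr ⟨hyU, heq2⟩
      · rintro (⟨hyU, hlt⟩ | ⟨hyU, heq2⟩)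
        · exact ⟨hyU, hlt.le⟩
        · exact ⟨hyU, heq2.le⟩
    · rw [Finset.disjoint_left]
      intro y h1 h2
      simp only [Finset.mem_filter] at h1 h2
      exact absurd h2.2 (ne_of_lt h1.2)
  have h1 := hsplit x
  have h2 := hsplit x'
  rw [hB, hB'] at hcards
  have hpos : 0 < (U.filter (fun y => cw x' y = σ)).card := by
    obtain ⟨y, hyU, hyσ⟩ := hy
    exact Finset.card_pos.mpr ⟨y, Finset.mem_filter.mpr ⟨hyU, hyσ⟩⟩
  have : 0 < (U.filter (fun y => cw x y = σ)).card := by omega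
  obtain ⟨y, hy2⟩ := Finset.card_pos.mp this
  obtain ⟨hyU, hyσ⟩ := Finset.mem_filter.mp hy2
  exact ⟨y, hyU, hyσ⟩

/-- Profile strict order: `a` beats `b`. -/
def PLt (U : Finset Real.Angle) (a b : Real.Angle) : Prop :=
  ∃ w : ℝ, (∀ v, v < w → cnt U a v = cnt U b v) ∧ cnt U b w < cnt U a w

lemma PLt.asymm' {U : Finset Real.Angle} {a b : Real.Angle}
    (h1 : PLt U a b) (h2 : PLt U b a) : False := by
  obtain ⟨w1, he1, hl1⟩ := h1
  obtain ⟨w2, he2, hl2⟩ := h2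
  rcases lt_trichotomy w1 w2 with h | h | h
  · have := he2 w1 h
    omega
  · subst h
    omega
  · have := he1 w2 h
    omega


/-! ### Lex order on gap sequences vs counting profiles -/

def gl (l : List ℝ) : List ℝ := List.zipWith (fun a b => a - b) (l.tail ++ [2 * π]) l

lemma gapSeq_eq_gl (S : Finset Real.Angle) (p : Real.Angle) : gapSeq S p = gl (dists S p) := rfl

lemma gl_cons₂ (c x : ℝ) (l : List ℝ) : gl (c :: x :: l) = (x - c) :: gl (x :: l) := rfl

lemma not_lex_of_gt {a b : ℝ} {A B : List ℝ} (h : b < a) :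
    ¬ List.Lex (· < ·) (a :: A) (b :: B) := by
  intro hl
  cases hl with
  | cons h' => exact lt_irrefl _ h
  | rel h' => exact lt_asymm h h'

lemma gl_lex : ∀ (d : List ℝ) (c : ℝ) (e : List ℝ), d.length = e.length →
    (List.Lex (· < ·) (gl (c :: d)) (gl (c :: e)) ↔ List.Lex (· < ·) d e) := by
  intro d
  induction d with
  | nil =>
    intro c e hlen
    have he : e = [] := List.length_eq_zero_iff.mp hlen.symm
    subst he
    constructor
    · intro h
      simp only [gl] at h
      exact absurd h (by
        have : ∀ (a : ℝ), ¬ List.Lex (· < ·) [a] [a] := by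
          intro a h
          rw [List.lex_singleton_iff] at h
          exact lt_irrefl _ h
        exact this _)
    · intro h
      exact absurd h (List.not_lex_nil)
  | cons x d' IH =>
    intro c e hlen
    match e with
    | [] => simp at hlen
    | y :: e' =>
      have hlen' : d'.length = e'.length := by simpa using hlen
      rw [gl_cons₂, gl_cons₂]
      rcases lt_trichotomy x y with hxy | hxy | hxy
      · constructor
        · intro _; exact List.Lex.rel hxy
        · intro _; exact List.Lex.rel (by linarith)
      · subst hxy
        rw [List.lex_cons_iff, List.lex_cons_iff, IH x e' hlen']
      · constructor
        · intro h
          exact absurd h (not_lex_of_gt (by linarith))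
        · intro h
          exact absurd h (not_lex_of_gt hxy)

def lcnt (l : List ℝ) (v : ℝ) : ℕ := (l.filter (fun m => decide (m ≤ v))).length

lemma lcnt_nil (v : ℝ) : lcnt [] v = 0 := rfl

lemma lcnt_cons (x : ℝ) (l : List ℝ) (v : ℝ) :
    lcnt (x :: l) v = (if x ≤ v then 1 else 0) + lcnt l v := by
  unfold lcnt
  rw [List.filter_cons]
  by_cases h : x ≤ v
  · simp [h]; omega
  · simp [h]

lemma lcnt_zero {l : List ℝ} {v : ℝ} (h : ∀ m ∈ l, v < m) : lcnt l v = 0 := by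
  unfold lcnt
  rw [List.length_eq_zero_iff]
  rw [List.filter_eq_nil_iff]
  intro a ha
  simp only [decide_eq_true_eq]
  exact not_le.mpr (h a ha)

lemma lex_iff_lcnt : ∀ (d e : List ℝ), d.length = e.length → d.Pairwise (· < ·) →
    e.Pairwise (· < ·) →
    (List.Lex (· < ·) d e ↔
      ∃ w : ℝ, (∀ v, v < w → lcnt d v = lcnt e v) ∧ lcnt e w < lcnt d w) := by
  intro d
  induction d with
  | nil =>
    intro e hlen _ _
    have he : e = [] := List.length_eq_zero_iff.mp hlen.symm
    subst he
    constructor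
    · intro h; exact absurd h (List.not_lex_nil)
    · rintro ⟨w, -, hlt⟩; simp [lcnt_nil] at hlt
  | cons x d' IH =>
    intro e hlen hsd hse
    match e with
    | [] => simp at hlen
    | y :: e' =>
      have hlen' : d'.length = e'.length := by simpa using hlen
      rw [List.pairwise_cons] at hsd hse
      obtain ⟨hxd, hsd'⟩ := hsd
      obtain ⟨hye, hse'⟩ := hse
      rcases lt_trichotomy x y with hxy | hxy | hxy
      · have hLex : List.Lex (· < ·) (x :: d') (y :: e') := List.Lex.rel hxy
        constructor
        · intro _
          refine ⟨x, ?_, ?_⟩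
          · intro v hv
            rw [lcnt_zero (l := x :: d'), lcnt_zero (l := y :: e')]
            · intro m hm
              rcases List.mem_cons.mp hm with rfl | hm'
              · linarith
              · have := hye m hm'; linarith
            · intro m hm
              rcases List.mem_cons.mp hm with rfl | hm'
              · exact hv
              · have := hxd m hm'; linarith
          · rw [lcnt_zero (l := y :: e'), lcnt_cons]
            · simp
            · intro m hm
              rcases List.mem_cons.mp hm with rfl | hm'
              · exact hxy
              · have := hye m hm'; linarith
        · intro _; exact hLex
      · subst hxy
        rw [List.lex_cons_iff, IH e' hlen' hsd' hse']
        apply exists_congr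
        intro w
        constructor
        · rintro ⟨hall, hlt⟩
          constructor
          · intro v hv
            have h2 := hall v hv
            rw [lcnt_cons, lcnt_cons]
            omega
          · rw [lcnt_cons, lcnt_cons]
            omega
        · rintro ⟨hall, hlt⟩
          constructor
          · intro v hv
            have h2 := hall v hv
            rw [lcnt_cons, lcnt_cons] at h2
            omega
          · rw [lcnt_cons, lcnt_cons] at hlt
            omega
      · constructor
        · intro h
          exact absurd h (not_lex_of_gt hxy)
        · rintro ⟨w, hall, hlt⟩
          exfalso
          rcases le_or_gt w y with hwy | hwy
          · have hz : lcnt (x :: d') w = 0 := by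
              apply lcnt_zero
              intro m hm
              rcases List.mem_cons.mp hm with rfl | hm'
              · linarith
              · have := hxd m hm'; linarith
            omega
          · have := hall y hwy
            have hz : lcnt (x :: d') y = 0 := by
              apply lcnt_zero
              intro m hm
              rcases List.mem_cons.mp hm with rfl | hm'
              · exact hxy
              · have := hxd m hm'; linarith
            have hpos : 1 ≤ lcnt (y :: e') y := by
              rw [lcnt_cons]
              simp
            omega


lemma cnt_neg (U : Finset Real.Angle) (x : Real.Angle) {v : ℝ} (hv : v < 0) :
    cnt U x v = 0 := by
  unfold cnt
  rw [Finset.card_eq_zero, Finset.eq_empty_iff_forall_notMem]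
  intro y hy
  obtain ⟨-, hle⟩ := Finset.mem_filter.mp hy
  linarith [cw_nonneg x y]

lemma cw_injective (x : Real.Angle) : Function.Injective (cw x) := fun _ _ h => cw_inj h

lemma dists_sorted (U : Finset Real.Angle) (x : Real.Angle) :
    (dists U x).Pairwise (· < ·) := by
  unfold dists
  exact ((Finset.pairwise_sort _ _).and (Finset.sort_nodup _ _)).imp (fun h => lt_of_le_of_ne h.1 h.2)

lemma dists_length (U : Finset Real.Angle) (x : Real.Angle) :
    (dists U x).length = U.card := by
  unfold dists
  rw [Finset.length_sort, Finset.card_image_of_injective _ (cw_injective x)]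

lemma mem_dists {U : Finset Real.Angle} {x : Real.Angle} {t : ℝ} :
    t ∈ dists U x ↔ ∃ y ∈ U, cw x y = t := by
  unfold dists
  rw [Finset.mem_sort, Finset.mem_image]

lemma dists_eq_cons {U : Finset Real.Angle} {x : Real.Angle} (hx : x ∈ U) :
    dists U x = 0 :: (dists U x).tail := by
  have h0 : (0 : ℝ) ∈ dists U x := mem_dists.mpr ⟨x, hx, cw_self x⟩
  have hnn : ∀ m ∈ dists U x, 0 ≤ m := by
    intro m hm
    obtain ⟨y, -, rfl⟩ := mem_dists.mp hm
    exact cw_nonneg _ _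
  have hs := dists_sorted U x
  rcases hd : dists U x with - | ⟨a, t⟩
  · rw [hd] at h0; simp at h0
  · rw [hd] at h0 hnn hs
    rw [List.pairwise_cons] at hs
    have ha : a = 0 := by
      rcases List.mem_cons.mp h0 with h | h
      · exact h.symm
      · have := hs.1 0 h
        have := hnn a (List.mem_cons_self (a := a) (l := t))
        linarith
    rw [ha]
    rfl

lemma lcnt_dists (U : Finset Real.Angle) (x : Real.Angle) (w : ℝ) :
    lcnt (dists U x) w = cnt U x w := by
  unfold lcnt dists cnt
  rw [← List.countP_eq_length_filter, List.Perm.countP_eq _ (Finset.sort_perm_toList _ _),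
    List.countP_eq_length_filter]
  have hperm : ((U.image (cw x)).toList.filter (fun m => decide (m ≤ w))).Perm
      (((U.image (cw x)).filter (fun m => m ≤ w)).toList) := by
    rw [← Multiset.coe_eq_coe, ← Multiset.filter_coe, Finset.coe_toList, Finset.coe_toList,
      Finset.filter_val]
  rw [hperm.length_eq, Finset.length_toList]
  rw [Finset.filter_image, Finset.card_image_of_injective _ (cw_injective x)]

lemma lexLt_asymm {x y : List ℝ} (h1 : lexLt x y) (h2 : lexLt y x) : False := by
  haveI : IsAsymm ℝ (· < ·) := ⟨fun _ _ ha hb => absurd hb (lt_asymm ha)⟩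
  exact (List.Lex.asymm (· < ·)).asymm _ _ h1 h2

lemma beats_iff {U : Finset Real.Angle} {a b : Real.Angle} (ha : a ∈ U) (hb : b ∈ U) :
    lexLt (gapSeq U a) (gapSeq U b) ↔ PLt U a b := by
  unfold lexLt
  rw [gapSeq_eq_gl, gapSeq_eq_gl]
  have hda := dists_eq_cons ha
  have hdb := dists_eq_cons hb
  have hlen : (dists U a).length = (dists U b).length := by
    rw [dists_length, dists_length]
  have hlent : (dists U a).tail.length = (dists U b).tail.length := by
    conv at hlen => rw [hda, hdb]
    simpa using hlen
  conv_lhs => rw [hda, hdb]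
  rw [gl_lex _ 0 _ hlent]
  haveI : IsIrrefl ℝ (· < ·) := ⟨lt_irrefl⟩
  rw [← List.lex_cons_iff (r := (· < ·)) (a := (0 : ℝ))]
  rw [← hda, ← hdb]
  rw [lex_iff_lcnt _ _ hlen (dists_sorted U a) (dists_sorted U b)]
  unfold PLt
  apply exists_congr
  intro w
  simp only [lcnt_dists]

/-- Pairwise robust form of "lemma00". -/
lemma lem00 {T : Finset Real.Angle} {p a b : Real.Angle} (hp : p ∉ T)
    (hab : a ≠ b) (h1 : PLt T a b) (h2 : PLt (insert p T) b a) : cw a b ≤ cw a p := by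
  by_contra hgt
  push_neg at hgt
  have hba : b ≠ a := Ne.symm hab
  have hsum := cw_sum hab
  have hcb : cw b p = cw a p + cw b a := by
    apply cw_unique
    · linarith [cw_nonneg a p, cw_nonneg b a]
    · linarith [cw_lt a b]
    · rw [Real.Angle.coe_add, cw_coe, cw_coe]
      abel
  have hba0 : 0 < cw b a := by
    rcases lt_or_eq_of_le (cw_nonneg b a) with h | h
    · exact h
    · exact absurd (cw_eq_zero h.symm) hba
  have hcbgt : cw a p < cw b p := by rw [hcb]; linarith
  obtain ⟨Y, hYe, hYlt⟩ := h1
  have final : PLt (insert p T) a b := by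
    refine ⟨min Y (cw a p), ?_, ?_⟩
    · intro v hv
      have hv1 : v < Y := lt_of_lt_of_le hv (min_le_left _ _)
      have hv2 : v < cw a p := lt_of_lt_of_le hv (min_le_right _ _)
      rw [cnt_insert _ _ _ _ hp, cnt_insert _ _ _ _ hp]
      rw [if_neg (not_le.mpr hv2), if_neg (not_le.mpr (by linarith : v < cw b p))]
      rw [hYe v hv1]
    · rcases le_or_gt (cw a p) Y with hle | hlt
      · rw [min_eq_right hle]
        rw [cnt_insert _ _ _ _ hp, cnt_insert _ _ _ _ hp]
        rw [if_pos le_rfl, if_neg (not_le.mpr hcbgt)]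
        have : cnt T b (cw a p) ≤ cnt T a (cw a p) := by
          rcases lt_or_eq_of_le hle with h | h
          · exact le_of_eq (hYe _ h).symm
          · rw [h]; exact hYlt.le
        omega
      · rw [min_eq_left hlt.le]
        rw [cnt_insert _ _ _ _ hp, cnt_insert _ _ _ _ hp]
        rw [if_neg (not_le.mpr hlt), if_neg (not_le.mpr (by linarith : Y < cw b p))]
        omega
  exact PLt.asymm' final h2


/-- Case B is impossible: if `L` truly leads `S` and `r ≠ L` truly leads
`S ∪ {antipode r}` with `antipode r ∉ S`, contradiction. -/
lemma caseB {S : Finset Real.Angle} {L r : Real.Angle} (hp : antipode r ∉ S)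
    (hLS : TrueLeader S L) (hrC : TrueLeader (insert (antipode r) S) r)
    (hr : r ∈ S) (hne : r ≠ L) : False := by
  have hLmem := hLS.1
  have hLC : L ∈ insert (antipode r) S := Finset.mem_insert_of_mem hLmem
  have hLr_T : PLt S L r := (beats_iff hLmem hr).mp (hLS.2 r hr hne)
  have hrL_C : PLt (insert (antipode r) S) r L :=
    (beats_iff hrC.1 hLC).mp (hrC.2 L hLC (Ne.symm hne))
  have hLp : L ≠ antipode r := fun h => hp (h ▸ hLmem)
  have hLr : L ≠ r := Ne.symm hne
  have hcrp : cw r (antipode r) = π := cw_antipode r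
  have hπ := Real.pi_pos
  -- σ := cw L r
  have hσpos : 0 < cw L r := by
    rcases lt_or_eq_of_le (cw_nonneg L r) with h | h
    · exact h
    · exact absurd (cw_eq_zero h.symm) hLr
  have hσ2 : cw L r < 2 * π := cw_lt L r
  have hrLcoe : ((cw L r : ℝ) : Real.Angle) = r - L := cw_coe L r
  have hσne : cw L r ≠ π := by
    intro h
    apply hLp
    have : antipode r - L = ((cw L r + π : ℝ) : Real.Angle) := by
      rw [Real.Angle.coe_add, hrLcoe]
      unfold antipode
      abel
    rw [h] at this
    have h2 : antipode r - L = ((2 * π : ℝ) : Real.Angle) := by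
      rw [this]; norm_num [two_mul]
    rw [Real.Angle.coe_two_pi] at h2
    have := sub_eq_zero.mp h2
    exact this.symm
  -- lem00 gives cw L r ≤ cw L (antipode r), which forces cw L r < π
  have h00 : cw L r ≤ cw L (antipode r) := lem00 hp hLr hLr_T hrL_C
  have hσlt : cw L r < π := by
    rcases lt_trichotomy (cw L r) π with h | h | h
    · exact h
    · exact absurd h hσne
    · exfalso
      have hc : cw L (antipode r) = cw L r - π := by
        apply cw_unique (by linarith) (by linarith)
        rw [Real.Angle.coe_sub, hrLcoe]
        unfold antipode
        rw [sub_eq_add_neg (r - L), Real.Angle.neg_coe_pi]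
        abel
      rw [hc] at h00
      linarith
  have hcLp : cw L (antipode r) = cw L r + π := by
    apply cw_unique (by linarith) (by linarith)
    rw [Real.Angle.coe_add, hrLcoe]
    unfold antipode
    abel
  -- unpack profiles
  obtain ⟨W, hWe, hWlt⟩ := hrL_C
  obtain ⟨Y, hYe, hYlt⟩ := hLr_T
  -- Step 1 : cw L r < W
  have hσW : cw L r < W := by
    by_contra hc
    push_neg at hc
    have hbad : PLt S r L := by
      refine ⟨W, ?_, ?_⟩
      · intro v hv
        have h1 := hWe v hv
        rw [cnt_insert _ _ _ _ hp, cnt_insert _ _ _ _ hp] at h1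
        rw [if_neg (not_le.mpr (by rw [hcrp]; linarith)),
          if_neg (not_le.mpr (by rw [hcLp]; linarith))] at h1
        exact h1
      · have h1 := hWlt
        rw [cnt_insert _ _ _ _ hp, cnt_insert _ _ _ _ hp] at h1
        rw [if_neg (not_le.mpr (by rw [hcLp]; linarith)),
          if_neg (not_le.mpr (by rw [hcrp]; linarith))] at h1
        exact h1
    exact PLt.asymm' hbad ⟨Y, hYe, hYlt⟩
  -- W < 2π
  have hW2 : W < 2 * π := by
    by_contra hc
    push_neg at hc
    rw [cnt_top _ _ hc, cnt_top _ _ hc] at hWlt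
    exact lt_irrefl _ hWlt
  -- Step 2 : the witness point q at distance σ clockwise of r
  have hreal : ∃ y ∈ insert (antipode r) S, cw r y = cw L r := by
    apply realize_transfer _ r L (cw L r)
    · intro v hv
      exact hWe v (lt_trans hv hσW)
    · exact hWe _ hσW
    · exact ⟨r, Finset.mem_insert_of_mem hr, rfl⟩
  obtain ⟨q, hqC, hqσ⟩ := hreal
  have hqr : q ≠ r := by
    intro h
    rw [h, cw_self] at hqσ
    exact absurd hqσ.symm (ne_of_gt hσpos)
  -- Step 3 : q beats r in C
  have hq_beats : PLt (insert (antipode r) S) q r := by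
    refine ⟨W - cw L r, ?_, ?_⟩
    · intro v hv
      rcases lt_or_ge v 0 with hneg | hpos
      · rw [cnt_neg _ _ hneg, cnt_neg _ _ hneg]
      · have s1 := cnt_shift (insert (antipode r) S) r q hqC v hpos
          (by rw [hqσ]; linarith)
        rw [hqσ] at s1
        have s2 := cnt_shift (insert (antipode r) S) L r
          (Finset.mem_insert_of_mem hr) v hpos (by linarith)
        have e1 : cnt (insert (antipode r) S) r (cw L r + v)
            = cnt (insert (antipode r) S) L (cw L r + v) := hWe _ (by linarith)
        have e2 : cnt (insert (antipode r) S) r (cw L r)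
            = cnt (insert (antipode r) S) L (cw L r) := hWe _ hσW
        omega
    · have hpos : (0 : ℝ) ≤ W - cw L r := by linarith
      have s1 := cnt_shift (insert (antipode r) S) r q hqC (W - cw L r) hpos
        (by rw [hqσ]; ring_nf; linarith)
      rw [hqσ] at s1
      have s2 := cnt_shift (insert (antipode r) S) L r
        (Finset.mem_insert_of_mem hr) (W - cw L r) hpos (by ring_nf; linarith)
      have hWW : cw L r + (W - cw L r) = W := by ring
      rw [hWW] at s1 s2
      have e2 : cnt (insert (antipode r) S) r (cw L r)
          = cnt (insert (antipode r) S) L (cw L r) := hWe _ hσW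
      omega
  have hr_beats_q : PLt (insert (antipode r) S) r q :=
    (beats_iff hrC.1 hqC).mp (hrC.2 q hqC hqr)
  exact PLt.asymm' hq_beats hr_beats_q

end Stmt9Aux

open Stmt9Aux in
theorem stmt9 (S : Finset Real.Angle) (hasym : RotAsym S)
    (L : Real.Angle) (hL : TrueLeader S L)
    (r : Real.Angle) (hr : r ∈ S) (hrL : r ≠ L) (hE : ExpectedLeader S r) :
    Real.pi ≤ cw L r := by
  classical
  have hLr : L ≠ r := Ne.symm hrL
  have contra : ¬ TrueLeader S r := by
    intro ht
    exact lexLt_asymm (hL.2 r hr hrL) (ht.2 L hL.1 hLr)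
  rcases hE with hC | hU
  · exfalso
    obtain ⟨hrS', hc0, hc1⟩ := hC
    by_cases hmem : antipode r ∈ S
    · have hC1 : C1 S r = S := by
        unfold C1; exact Finset.insert_eq_self.mpr hmem
      exact contra (hC1 ▸ hc1 (by rw [hC1]; exact hasym))
    · have hC0 : C0 S r = S := by
        unfold C0; exact Finset.erase_eq_of_notMem hmem
      exact contra (hC0 ▸ hc0 (by rw [hC0]; exact hasym))
  · obtain ⟨hrS', ha0, ha1, hxor⟩ := hU
    by_cases hmem : antipode r ∈ S
    · -- the antipode of `r` is occupied: use lemma00 on `S` minus the antipode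
      have hC1 : C1 S r = S := by unfold C1; exact Finset.insert_eq_self.mpr hmem
      have hnot1 : ¬ TrueLeader (C1 S r) r := by rw [hC1]; exact contra
      have ht0 : TrueLeader (C0 S r) r := by
        rcases hxor with ⟨h, -⟩ | ⟨h, -⟩
        · exact h
        · exact absurd h hnot1
      by_cases hLp : L = antipode r
      · have hpi : cw (antipode r) r = π := by
          have h2 := cw_antipode (antipode r)
          rw [antipode_antipode] at h2
          exact h2
        rw [hLp, hpi]
      · have hrp : r ≠ antipode r := fun h => (antipode_ne r) h.symm
        have hpT : antipode r ∉ S.erase (antipode r) := Finset.notMem_erase _ _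
        have hrT : r ∈ S.erase (antipode r) := Finset.mem_erase.mpr ⟨hrp, hr⟩
        have hLT : L ∈ S.erase (antipode r) := Finset.mem_erase.mpr ⟨hLp, hL.1⟩
        have ht0' : TrueLeader (S.erase (antipode r)) r := ht0
        have h1 : PLt (S.erase (antipode r)) r L :=
          (beats_iff hrT hLT).mp (ht0'.2 L hLT hLr)
        have hins : insert (antipode r) (S.erase (antipode r)) = S :=
          Finset.insert_erase hmem
        have h2 : PLt (insert (antipode r) (S.erase (antipode r))) L r := by
          rw [hins]
          exact (beats_iff hL.1 hr).mp (hL.2 r hr hrL)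
        have h00 := lem00 hpT hrL h1 h2
        rw [cw_antipode r] at h00
        have hsum := cw_sum hLr
        linarith
    · exfalso
      have hC0 : C0 S r = S := by unfold C0; exact Finset.erase_eq_of_notMem hmem
      have hnot0 : ¬ TrueLeader (C0 S r) r := by rw [hC0]; exact contra
      have ht1 : TrueLeader (C1 S r) r := by
        rcases hxor with ⟨h, -⟩ | ⟨h, -⟩
        · exact absurd h hnot0
        · exact h
      exact caseB hmem hL ht1 hr hrL
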